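/- Let μ > 0 and α₀, α₁ ∈ ℝ with μ > 2max(|α₀|,|α₁|) − (α₀+α₁), and let φ ∈ H²(0,1) be complex valued with φ(0)=φ(1)=0. Then ∫₀¹|φ''|² dy + (α₀/μ)|φ'(0)|² + (α₁/μ)|φ'(1)|² ≥ (1 − (2max(|α₀|,|α₁|)−α₀−α₁)/μ)·∫₀¹|φ'|² dy. -/

import Mathlib

open intervalIntegral Set

lemma exists_zero_of_integral_zero {f : ℝ → ℝ} (hf : Continuous f)
    (h0 : ∫ y in (0:ℝ)..1, f y = 0) : ∃ c ∈ Icc (0:ℝ) 1, f c = 0 := by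
  by_contra hc
  push_neg at hc
  -- f has constant sign on [0,1]
  have key : ∀ g : ℝ → ℝ, Continuous g → (∀ c ∈ Icc (0:ℝ) 1, g c ≠ 0) → 0 < g 0 →
      0 < ∫ y in (0:ℝ)..1, g y := by
    intro g hg hgne hg0
    have hpos : ∀ x ∈ Ioo (0:ℝ) 1, 0 < g x := by
      intro x hx
      rcases lt_or_ge 0 (g x) with h | h
      · exact h
      · exfalso
        have hx1 : x ∈ Icc (0:ℝ) 1 := Ioo_subset_Icc_self hx
        have : (0:ℝ) ∈ uIcc (g 0) (g x) := by
          rw [mem_uIcc]; right; constructor <;> linarith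
        have := intermediate_value_uIcc (a := (0:ℝ)) (b := x) hg.continuousOn this
        obtain ⟨c, hcmem, hc0⟩ := this
        have : c ∈ Icc (0:ℝ) 1 := by
          have : uIcc (0:ℝ) x ⊆ Icc 0 1 := by
            rw [uIcc_of_le hx.1.le]
            exact Icc_subset_Icc le_rfl hx1.2
          exact this hcmem
        exact hgne c this hc0
    exact intervalIntegral_pos_of_pos_on (hg.intervalIntegrable _ _) hpos one_pos
  rcases lt_or_ge 0 (f 0) with h | h
  · exact absurd h0 (key f hf hc h).ne'
  · have h' : 0 < -f 0 := by
      have := hc 0 (by norm_num)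
      cases lt_or_gt_of_ne this with
      | inl h2 => linarith
      | inr h2 => linarith
    have := key (fun y => -f y) hf.neg (fun c hcm => neg_ne_zero.mpr (hc c hcm)) h'
    rw [intervalIntegral.integral_neg, h0] at this
    simp at this

lemma poincare_aux {f : ℝ → ℝ} (hf : ContDiff ℝ 1 f)
    (hmean : ∫ y in (0:ℝ)..1, f y = 0) :
    ∫ y in (0:ℝ)..1, (f y)^2 ≤ ∫ y in (0:ℝ)..1, (deriv f y)^2 := by
  have hfc : Continuous f := hf.continuous
  have hgc : Continuous (deriv f) := hf.continuous_deriv le_rfl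
  set g := deriv f with hg
  obtain ⟨c, hc, hfc0⟩ := exists_zero_of_integral_zero hfc hmean
  set J := ∫ y in (0:ℝ)..1, |g y| with hJ
  set I := ∫ y in (0:ℝ)..1, (g y)^2 with hI
  have hJ0 : 0 ≤ J := intervalIntegral.integral_nonneg zero_le_one (fun x _ => abs_nonneg _)
  have hI0 : 0 ≤ I := intervalIntegral.integral_nonneg zero_le_one (fun x _ => sq_nonneg _)
  -- step: |f y| ≤ J on [0,1]
  have hfJ : ∀ y ∈ Icc (0:ℝ) 1, |f y| ≤ J := by
    intro y hy
    have hftc : ∫ t in c..y, g t = f y - f c := by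
      apply intervalIntegral.integral_deriv_eq_sub
      · intro x _; exact hf.differentiable one_ne_zero x
      · exact hgc.intervalIntegrable _ _
    have h1 : |f y| = |∫ t in c..y, g t| := by rw [hftc, hfc0, sub_zero]
    rw [h1]
    calc |∫ t in c..y, g t| ≤ |∫ t in c..y, abs (g t)| := by
          have := intervalIntegral.norm_integral_le_abs_integral_norm
            (f := g) (a := c) (b := y) (μ := MeasureTheory.volume)
          simpa using this
      _ ≤ |∫ t in (0:ℝ)..1, abs (g t)| := by
          apply intervalIntegral.abs_integral_mono_interval
          · rw [uIoc_of_le (zero_le_one)]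
            intro t ht
            rcases mem_uIoc.mp ht with h | h
            · exact ⟨lt_of_le_of_lt hc.1 h.1, h.2.trans hy.2⟩
            · exact ⟨lt_of_le_of_lt hy.1 h.1, h.2.trans hc.2⟩
          · filter_upwards with x using abs_nonneg _
          · exact (hgc.abs).intervalIntegrable _ _
      _ = J := abs_of_nonneg hJ0
  -- step: J ≤ sqrt I
  have hJt : ∀ t : ℝ, 0 < t → J ≤ (t * I + 1/t)/2 := by
    intro t ht
    have hpt : ∀ y ∈ Icc (0:ℝ) 1, |g y| ≤ (t * (g y)^2 + 1/t)/2 := by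
      intro y _
      rw [le_div_iff₀ (by norm_num : (0:ℝ) < 2), ← mul_le_mul_iff_of_pos_right ht]
      calc |g y| * 2 * t = 2 * (t * |g y|) := by ring
        _ ≤ t^2 * (g y)^2 + 1 := by nlinarith [sq_nonneg (t * |g y| - 1), sq_abs (g y)]
        _ = (t * (g y)^2 + 1/t) * t := by field_simp
    have h2 : J ≤ ∫ y in (0:ℝ)..1, (t * (g y)^2 + 1/t)/2 := by
      apply intervalIntegral.integral_mono_on zero_le_one
        ((hgc.abs).intervalIntegrable _ _)
        ((((continuous_const.mul (hgc.pow 2)).add continuous_const).div_const 2).intervalIntegrable _ _)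
        hpt
    calc J ≤ ∫ y in (0:ℝ)..1, (t * (g y)^2 + 1/t)/2 := h2
      _ = (t * I + 1/t)/2 := by
          rw [intervalIntegral.integral_div, intervalIntegral.integral_add (f := fun x => t * g x ^ 2) (g := fun _ => 1/t)
            ((continuous_const.mul (hgc.pow 2)).intervalIntegrable _ _)
            (continuous_const.intervalIntegrable _ _),
            intervalIntegral.integral_const_mul, intervalIntegral.integral_const]
          simp [hI]
  have hJsqrt : J ≤ Real.sqrt I := by
    rcases eq_or_lt_of_le hI0 with h | h
    · have : ∀ t : ℝ, 0 < t → J ≤ 1/(2*t) := by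
        intro t ht
        have := hJt t ht
        rw [← h] at this
        calc J ≤ (t * 0 + 1/t)/2 := this
          _ = 1/(2*t) := by field_simp; ring
      have hJle : J ≤ 0 := by
        by_contra hJpos
        push_neg at hJpos
        have h3 := this (1/J) (by positivity)
        have h4 : (0:ℝ) < 2 * (1/J) := by positivity
        rw [le_div_iff₀ h4] at h3
        have h5 : J * (2 * (1/J)) = 2 := by field_simp
        linarith
      rw [← h, Real.sqrt_zero]; exact hJle
    · have hsq := Real.sq_sqrt hI0
      have hspos : 0 < Real.sqrt I := Real.sqrt_pos.mpr h
      have := hJt (1/Real.sqrt I) (by positivity)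
      have h5 : (1/Real.sqrt I) * I = Real.sqrt I := by
        rw [one_div, inv_mul_eq_div, eq_comm, eq_div_iff hspos.ne']
        nlinarith [hsq]
      calc J ≤ ((1/Real.sqrt I) * I + 1/(1/Real.sqrt I))/2 := this
        _ = Real.sqrt I := by rw [one_div_one_div, h5]; ring
  -- conclude
  have hpt2 : ∀ y ∈ Icc (0:ℝ) 1, (f y)^2 ≤ I := by
    intro y hy
    calc (f y)^2 = |f y|^2 := (sq_abs _).symm
      _ ≤ J^2 := pow_le_pow_left₀ (abs_nonneg _) (hfJ y hy) 2
      _ ≤ (Real.sqrt I)^2 := pow_le_pow_left₀ hJ0 hJsqrt 2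
      _ = I := Real.sq_sqrt hI0
  calc ∫ y in (0:ℝ)..1, (f y)^2 ≤ ∫ y in (0:ℝ)..1, I := by
        apply intervalIntegral.integral_mono_on zero_le_one
          ((hfc.pow 2).intervalIntegrable _ _)
          (continuous_const.intervalIntegrable _ _) hpt2
    _ = I := by simp

lemma boundary_est (α₀ α₁ : ℝ) {f : ℝ → ℝ} (hf : ContDiff ℝ 1 f) :
    α₀ * (f 0)^2 + α₁ * (f 1)^2 ≥
      (α₀ + α₁ - max |α₀| |α₁|) * (∫ y in (0:ℝ)..1, (f y)^2)
        - max |α₀| |α₁| * (∫ y in (0:ℝ)..1, (deriv f y)^2) := by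
  set M := max |α₀| |α₁| with hM
  have hM0 : 0 ≤ M := le_trans (abs_nonneg _) (le_max_left _ _)
  have hMa0 : |α₀| ≤ M := le_max_left _ _
  have hMa1 : |α₁| ≤ M := le_max_right _ _
  have hfc : Continuous f := hf.continuous
  have hgc : Continuous (deriv f) := hf.continuous_deriv le_rfl
  set g := deriv f with hg
  set w : ℝ → ℝ := fun y => (α₀ + α₁) * y - α₀ with hw
  -- FTC identity
  have hderiv : ∀ x ∈ uIcc (0:ℝ) 1, HasDerivAt (fun y => w y * (f y)^2)
      ((α₀ + α₁) * (f x)^2 + w x * (2 * f x * g x)) x := by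
    intro x _
    have h1 : HasDerivAt w (α₀ + α₁) x := by
      have := ((hasDerivAt_id' x).const_mul (α₀ + α₁)).sub_const α₀
      rw [mul_one] at this
      exact this
    have h2 : HasDerivAt (fun y => (f y)^2) (2 * f x * g x) x := by
      have := ((hf.differentiable one_ne_zero x).hasDerivAt).pow 2
      exact this.congr_deriv (by simp only [hg]; ring)
    exact h1.mul h2
  have hcont : Continuous fun y => (α₀ + α₁) * (f y)^2 + w y * (2 * f y * g y) := by
    apply Continuous.add
    · exact continuous_const.mul (hfc.pow 2)
    · exact ((continuous_const.mul continuous_id).sub continuous_const).mul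
        ((continuous_const.mul hfc).mul hgc)
  have hftc := intervalIntegral.integral_eq_sub_of_hasDerivAt hderiv
    (hcont.intervalIntegrable _ _)
  have hid : α₀ * (f 0)^2 + α₁ * (f 1)^2
      = ∫ y in (0:ℝ)..1, ((α₀ + α₁) * (f y)^2 + w y * (2 * f y * g y)) := by
    rw [hftc]; simp [hw]; ring
  rw [hid]
  -- pointwise lower bound
  have hpt : ∀ y ∈ Icc (0:ℝ) 1,
      (α₀ + α₁) * (f y)^2 - M * ((f y)^2 + (g y)^2)
        ≤ (α₀ + α₁) * (f y)^2 + w y * (2 * f y * g y) := by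
    intro y hy
    have hwy : |w y| ≤ M := by
      have h1 : w y = -(1 - y) * α₀ + y * α₁ := by rw [hw]; ring
      rw [h1, abs_le]
      have ha0 := abs_le.mp hMa0
      have ha1 := abs_le.mp hMa1
      constructor <;> nlinarith [hy.1, hy.2, ha0.1, ha0.2, ha1.1, ha1.2]
    have h2fg : |2 * f y * g y| ≤ (f y)^2 + (g y)^2 := by
      rw [abs_le]
      constructor
      · nlinarith [sq_nonneg (f y + g y)]
      · nlinarith [sq_nonneg (f y - g y)]
    have habs : |w y * (2 * f y * g y)| ≤ M * ((f y)^2 + (g y)^2) := by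
      rw [abs_mul]
      exact mul_le_mul hwy h2fg (abs_nonneg _) hM0
    have := neg_abs_le (w y * (2 * f y * g y))
    linarith
  -- integrate
  have hint1 : IntervalIntegrable (fun y => (α₀ + α₁) * (f y)^2 - M * ((f y)^2 + (g y)^2))
      MeasureTheory.volume 0 1 := by
    apply Continuous.intervalIntegrable
    exact (continuous_const.mul (hfc.pow 2)).sub
      (continuous_const.mul ((hfc.pow 2).add (hgc.pow 2)))
  have hmono := intervalIntegral.integral_mono_on zero_le_one hint1
    (hcont.intervalIntegrable _ _) hpt
  have hsplit : ∫ y in (0:ℝ)..1, ((α₀ + α₁) * (f y)^2 - M * ((f y)^2 + (g y)^2))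
      = (α₀ + α₁ - M) * (∫ y in (0:ℝ)..1, (f y)^2) - M * (∫ y in (0:ℝ)..1, (g y)^2) := by
    rw [intervalIntegral.integral_sub (f := fun y => (α₀ + α₁) * f y ^ 2) (g := fun y => M * (f y ^ 2 + g y ^ 2)) ((continuous_const.mul (hfc.pow 2)).intervalIntegrable _ _)
      ((continuous_const.mul ((hfc.pow 2).add (hgc.pow 2))).intervalIntegrable _ _),
      intervalIntegral.integral_const_mul, intervalIntegral.integral_const_mul,
      intervalIntegral.integral_add (f := fun y => f y ^ 2) (g := fun y => g y ^ 2) ((hfc.pow 2).intervalIntegrable _ _)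
        ((hgc.pow 2).intervalIntegrable _ _)]
    ring
  rw [hsplit] at hmono
  exact hmono

lemma complex_normsq (z : ℂ) : ‖z‖^2 = z.re^2 + z.im^2 := by
  rw [Complex.sq_norm, Complex.normSq_apply]; ring

lemma final_arith (μ α₀ α₁ A B b₀ b₁ : ℝ) (hμ : 0 < μ)
    (hμα : μ > 2 * max |α₀| |α₁| - (α₀ + α₁)) (hAB : B ≤ A) (hB0 : 0 ≤ B)
    (hb0 : 0 ≤ b₀) (hb1 : 0 ≤ b₁)
    (hbd : α₀ * b₀ + α₁ * b₁ ≥ (α₀ + α₁ - max |α₀| |α₁|) * B - max |α₀| |α₁| * A) :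
    A + (α₀ / μ) * b₀ + (α₁ / μ) * b₁ ≥ (1 - (2 * max |α₀| |α₁| - α₀ - α₁) / μ) * B := by
  set M := max |α₀| |α₁| with hM
  have hMa0 : |α₀| ≤ M := le_max_left _ _
  have hMa1 : |α₁| ≤ M := le_max_right _ _
  rcases le_or_gt (α₀ + α₁) M with hSM | hSM
  · have hμM : M ≤ μ := by linarith
    have hdivs : A + (α₀ / μ) * b₀ + (α₁ / μ) * b₁
        = A + (α₀ * b₀ + α₁ * b₁) / μ := by field_simp; ring
    rw [hdivs, ge_iff_le, ← sub_nonneg]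
    have heq : A + (α₀ * b₀ + α₁ * b₁) / μ - (1 - (2 * M - α₀ - α₁) / μ) * B
        = ((A - B) * (μ - M)
            + ((α₀ * b₀ + α₁ * b₁) - ((α₀ + α₁ - M) * B - M * A))) / μ := by
      field_simp
      ring
    rw [heq]
    apply div_nonneg _ hμ.le
    have h1 : 0 ≤ (A - B) * (μ - M) := mul_nonneg (by linarith) (by linarith)
    linarith
  · have ha0 : 0 < α₀ := by linarith [le_abs_self α₁]
    have ha1 : 0 < α₁ := by linarith [le_abs_self α₀]
    have hK0 : 0 ≤ 2 * M - (α₀ + α₁) := by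
      linarith [le_abs_self α₀, le_abs_self α₁]
    have hbpos0 : 0 ≤ (α₀ / μ) * b₀ := mul_nonneg (div_nonneg ha0.le hμ.le) hb0
    have hbpos1 : 0 ≤ (α₁ / μ) * b₁ := mul_nonneg (div_nonneg ha1.le hμ.le) hb1
    have hKμ : 0 ≤ (2 * M - α₀ - α₁) / μ := div_nonneg (by linarith) hμ.le
    rw [ge_iff_le]
    nlinarith [mul_nonneg hKμ hB0]

/-- Estimate (5.13): weighted second-order energy bound, Navier conditions on both
boundaries. -/
theorem stmt_13 (μ α₀ α₁ : ℝ) (hμ : 0 < μ)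
    (hμα : μ > 2 * max |α₀| |α₁| - (α₀ + α₁))
    (φ : ℝ → ℂ) (hφ : ContDiff ℝ 2 φ) (hbc0 : φ 0 = 0) (hbc1 : φ 1 = 0) :
    (∫ y in (0:ℝ)..1, ‖deriv (deriv φ) y‖ ^ 2)
        + (α₀ / μ) * ‖deriv φ 0‖ ^ 2 + (α₁ / μ) * ‖deriv φ 1‖ ^ 2
      ≥ (1 - (2 * max |α₀| |α₁| - α₀ - α₁) / μ) * ∫ y in (0:ℝ)..1, ‖deriv φ y‖ ^ 2 := by
  set M := max |α₀| |α₁| with hM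
  have hMa0 : |α₀| ≤ M := le_max_left _ _
  have hMa1 : |α₁| ≤ M := le_max_right _ _
  have hM0 : 0 ≤ M := le_trans (abs_nonneg _) hMa0
  -- regularity
  have hψ : ContDiff ℝ 1 (deriv φ) := by
    have h2 : ContDiff ℝ ((1:ℕ∞)+1) φ := by norm_num; exact hφ
    exact (contDiff_succ_iff_deriv.mp h2).2.2
  set ψ := deriv φ with hψdef
  have hψc : Continuous ψ := hψ.continuous
  have hψ'c : Continuous (deriv ψ) := hψ.continuous_deriv le_rfl
  -- real and imaginary parts
  set u : ℝ → ℝ := fun y => (ψ y).re with hudef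
  set v : ℝ → ℝ := fun y => (ψ y).im with hvdef
  have hu : ContDiff ℝ 1 u := Complex.reCLM.contDiff.comp hψ
  have hv : ContDiff ℝ 1 v := Complex.imCLM.contDiff.comp hψ
  have hdu : ∀ y, deriv u y = (deriv ψ y).re := fun y =>
    (Complex.reCLM.hasFDerivAt.comp_hasDerivAt y
      ((hψ.differentiable one_ne_zero y).hasDerivAt)).deriv
  have hdv : ∀ y, deriv v y = (deriv ψ y).im := fun y =>
    (Complex.imCLM.hasFDerivAt.comp_hasDerivAt y
      ((hψ.differentiable one_ne_zero y).hasDerivAt)).deriv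
  -- mean zero
  have hmean : ∫ y in (0:ℝ)..1, ψ y = 0 := by
    rw [hψdef, intervalIntegral.integral_deriv_eq_sub
      (fun x _ => hφ.differentiable (by norm_num) x) (hψc.intervalIntegrable _ _),
      hbc0, hbc1, sub_zero]
  have hmu : ∫ y in (0:ℝ)..1, u y = 0 := by
    have := Complex.reCLM.intervalIntegral_comp_comm
      (hψc.intervalIntegrable (μ := MeasureTheory.volume) 0 1)
    simp only [hudef]
    rw [show (fun y => (ψ y).re) = fun y => Complex.reCLM (ψ y) from rfl, this, hmean]
    simp
  have hmv : ∫ y in (0:ℝ)..1, v y = 0 := by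
    have := Complex.imCLM.intervalIntegral_comp_comm
      (hψc.intervalIntegrable (μ := MeasureTheory.volume) 0 1)
    simp only [hvdef]
    rw [show (fun y => (ψ y).im) = fun y => Complex.imCLM (ψ y) from rfl, this, hmean]
    simp
  -- notation for integrals
  set Bu := ∫ y in (0:ℝ)..1, (u y)^2 with hBu
  set Bv := ∫ y in (0:ℝ)..1, (v y)^2 with hBv
  set Au := ∫ y in (0:ℝ)..1, (deriv u y)^2 with hAu
  set Av := ∫ y in (0:ℝ)..1, (deriv v y)^2 with hAv
  have huc : Continuous u := hu.continuous
  have hvc : Continuous v := hv.continuous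
  have hduc : Continuous (deriv u) := hu.continuous_deriv le_rfl
  have hdvc : Continuous (deriv v) := hv.continuous_deriv le_rfl
  -- Poincaré
  have hPu : Bu ≤ Au := poincare_aux hu hmu
  have hPv : Bv ≤ Av := poincare_aux hv hmv
  -- boundary estimates
  have hbu := boundary_est α₀ α₁ hu
  have hbv := boundary_est α₀ α₁ hv
  rw [← hM] at hbu hbv
  -- rewriting the complex integrals
  have hB : (∫ y in (0:ℝ)..1, ‖ψ y‖^2) = Bu + Bv := by
    rw [hBu, hBv, ← intervalIntegral.integral_add (f := fun y => u y ^ 2) (g := fun y => v y ^ 2) ((huc.pow 2).intervalIntegrable _ _)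
      ((hvc.pow 2).intervalIntegrable _ _)]
    apply intervalIntegral.integral_congr
    intro y _
    exact complex_normsq (ψ y)
  have hA : (∫ y in (0:ℝ)..1, ‖deriv ψ y‖^2) = Au + Av := by
    rw [hAu, hAv, ← intervalIntegral.integral_add (f := fun y => deriv u y ^ 2) (g := fun y => deriv v y ^ 2) ((hduc.pow 2).intervalIntegrable _ _)
      ((hdvc.pow 2).intervalIntegrable _ _)]
    apply intervalIntegral.integral_congr
    intro y _
    show ‖deriv ψ y‖^2 = (deriv u y)^2 + (deriv v y)^2
    rw [complex_normsq (deriv ψ y), hdu y, hdv y]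
  have hb0 : ‖ψ 0‖^2 = (u 0)^2 + (v 0)^2 := complex_normsq (ψ 0)
  have hb1 : ‖ψ 1‖^2 = (u 1)^2 + (v 1)^2 := complex_normsq (ψ 1)
  rw [hA, hB, hb0, hb1]
  -- nonnegativity facts
  have hBu0 : 0 ≤ Bu := intervalIntegral.integral_nonneg zero_le_one (fun x _ => sq_nonneg _)
  have hBv0 : 0 ≤ Bv := intervalIntegral.integral_nonneg zero_le_one (fun x _ => sq_nonneg _)
  rw [← hBu, ← hAu] at hbu
  rw [← hBv, ← hAv] at hbv
  apply final_arith μ α₀ α₁ (Au + Av) (Bu + Bv) _ _ hμ hμα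
    (add_le_add hPu hPv) (add_nonneg hBu0 hBv0) (by positivity) (by positivity)
  have h1 : α₀ * (u 0 ^ 2 + v 0 ^ 2) + α₁ * (u 1 ^ 2 + v 1 ^ 2)
      = (α₀ * u 0 ^ 2 + α₁ * u 1 ^ 2) + (α₀ * v 0 ^ 2 + α₁ * v 1 ^ 2) := by ring
  rw [ge_iff_le, h1]
  have := add_le_add hbu.le hbv.le
  linarith
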